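/- Assume that the cost per stage g is bounded over X×U×W, that there exists a uniformly proper policy, that the state space X is finite, that J*(x) > 0 for all x ≠ t, and that X* = X̂, where X* = {x ∈ X : J*(x) < ∞}. Then Ĵ = J*. -/

import Mathlib

open scoped ENNReal
open Filter
open scoped Classical NNReal

/-- A stochastic shortest path (SSP) problem with state space `X`, control space `U`,
countable disturbance space `W`, a cost-free absorbing termination state `t`,
nonempty control constraint sets `Uc x ⊆ U`, disturbance distributions `P x u`,
system function `f`, and nonnegative (finite-valued) cost per stage `g`. -/
structure SSP (X U W : Type*) [Countable W] where
  t : X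
  Uc : X → Set U
  Uc_nonempty : ∀ x, (Uc x).Nonempty
  P : X → U → PMF W
  f : X → U → W → X
  g : X → U → W → ℝ≥0∞
  g_lt_top : ∀ x u w, g x u w < ⊤
  f_absorb : ∀ u ∈ Uc t, ∀ w, f t u w = t
  g_zero : ∀ u ∈ Uc t, ∀ w, g t u w = 0

namespace SSP

variable {X U W : Type*} [Countable W] (S : SSP X U W)

/-- A policy `π = (μ₀, μ₁, …)` is admissible if `μ_k(x) ∈ U(x)` for all `k, x`. -/
def IsPolicy (π : ℕ → X → U) : Prop := ∀ k x, π k x ∈ S.Uc x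

/-- Distribution of the state `x_k` after `k` steps under policy `π` starting from `x₀`. -/
noncomputable def stateDist (π : ℕ → X → U) (x₀ : X) : ℕ → PMF X
  | 0 => PMF.pure x₀
  | k + 1 => (stateDist π x₀ k).bind fun x => (S.P x (π k x)).map (S.f x (π k x))

/-- Expected value `E^π_{x₀}[J(x_k)]` of a nonnegative function along the trajectory. -/
noncomputable def expect (π : ℕ → X → U) (x₀ : X) (k : ℕ) (J : X → ℝ≥0∞) : ℝ≥0∞ :=
  ∑' x, S.stateDist π x₀ k x * J x

/-- Expected cost `E^π_{x₀}[g(x_k, μ_k(x_k), w_k)]` of the `k`-th stage. -/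
noncomputable def stageCost (π : ℕ → X → U) (x₀ : X) (k : ℕ) : ℝ≥0∞ :=
  S.expect π x₀ k fun x => ∑' w, S.P x (π k x) w * S.g x (π k x) w

/-- The cost `J_π(x₀) = Σ_{k≥0} E^π_{x₀}[g(x_k, μ_k(x_k), w_k)]` of a policy. -/
noncomputable def Jcost (π : ℕ → X → U) (x₀ : X) : ℝ≥0∞ :=
  ∑' k, S.stageCost π x₀ k

/-- `r_k(π, x₀)`: probability that `x_k ≠ t` under `π` starting from `x₀`. -/
noncomputable def r (π : ℕ → X → U) (x₀ : X) (k : ℕ) : ℝ≥0∞ :=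
  S.expect π x₀ k fun x => if x = S.t then 0 else 1

/-- `Σ_{k≥0} r_k(π,x₀)`: expected number of steps to reach the destination. -/
noncomputable def N (π : ℕ → X → U) (x₀ : X) : ℝ≥0∞ := ∑' k, S.r π x₀ k

/-- A policy is proper at `x` if it is admissible, `J_π(x) < ∞` and `Σ_k r_k(π,x) < ∞`. -/
def ProperAt (π : ℕ → X → U) (x : X) : Prop :=
  S.IsPolicy π ∧ S.Jcost π x < ⊤ ∧ S.N π x < ⊤

/-- The optimal cost function `J*`. -/
noncomputable def Jstar (x : X) : ℝ≥0∞ := ⨅ π ∈ {π | S.IsPolicy π}, S.Jcost π x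

/-- The restricted optimal cost function `Ĵ` over policies proper at `x`
(infimum over the empty set is `∞`). -/
noncomputable def Jhat (x : X) : ℝ≥0∞ := ⨅ π ∈ {π | S.ProperAt π x}, S.Jcost π x

/-- The effective domain `X̂ = {x | Ĵ(x) < ∞}` of `Ĵ`. -/
def Xhat : Set X := {x | S.Jhat x < ⊤}

/-- Expected `k`-th stage cost in the `δ`-perturbed problem (stage cost `g + δ` off `t`). -/
noncomputable def stageCostPert (δ : ℝ≥0∞) (π : ℕ → X → U) (x₀ : X) (k : ℕ) : ℝ≥0∞ :=
  S.expect π x₀ k fun x =>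
    ∑' w, S.P x (π k x) w * (S.g x (π k x) w + if x = S.t then 0 else δ)

/-- The cost `J_{π,δ}` of a policy in the `δ`-perturbed problem. -/
noncomputable def Jpert (δ : ℝ≥0∞) (π : ℕ → X → U) (x₀ : X) : ℝ≥0∞ :=
  ∑' k, S.stageCostPert δ π x₀ k

/-- The optimal cost function `Ĵ_δ` of the `δ`-perturbed problem. -/
noncomputable def JhatPert (δ : ℝ≥0∞) (x : X) : ℝ≥0∞ :=
  ⨅ π ∈ {π | S.IsPolicy π}, S.Jpert δ π x

/-- `Q J x u = E_{w∼P(·|x,u)}[g(x,u,w) + J(f(x,u,w))]`. -/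
noncomputable def Q (J : X → ℝ≥0∞) (x : X) (u : U) : ℝ≥0∞ :=
  ∑' w, S.P x u w * (S.g x u w + J (S.f x u w))

/-- The Bellman operator `(TJ)(x) = inf_{u ∈ U(x)} E[g(x,u,w) + J(f(x,u,w))]`. -/
noncomputable def bellman (J : X → ℝ≥0∞) (x : X) : ℝ≥0∞ := ⨅ u ∈ S.Uc x, S.Q J x u

/-- The tail policy `π_k = (μ_k, μ_{k+1}, …)`. -/
def tail (π : ℕ → X → U) (k : ℕ) : ℕ → X → U := fun m => π (k + m)

/-- The set `Ŵ` of functions `J` with `J(t) = 0`, `Ĵ ≤ J`, and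
`E^π_{x₀}[J(x_k)] → 0` for every pair `(π, x₀)` with `π` proper at `x₀`. -/
def What : Set (X → ℝ≥0∞) :=
  {J | J S.t = 0 ∧ S.Jhat ≤ J ∧
    ∀ π x₀, S.ProperAt π x₀ → Tendsto (fun k => S.expect π x₀ k J) atTop (nhds 0)}

/-- The set `B` of functions `J` with `J(t) = 0` that are bounded over `X̂`. -/
def Bset : Set (X → ℝ≥0∞) :=
  {J | J S.t = 0 ∧ (⨆ x ∈ S.Xhat, J x) < ⊤}

/-- A policy is uniformly proper if it is admissible and the expected number of steps
to reach the destination is uniformly bounded over `X̂`. -/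
def UniformlyProper (π : ℕ → X → U) : Prop :=
  S.IsPolicy π ∧ (⨆ x ∈ S.Xhat, S.N π x) < ⊤

/-- The cost per stage `g` is (uniformly) bounded over `X × U × W`. -/
def BoundedCost : Prop := ∃ b : ℝ≥0∞, b < ⊤ ∧ ∀ x u w, S.g x u w ≤ b

end SSP
section Aux

open scoped ENNReal
open Filter

variable {X U W : Type*} [Countable W] (S : SSP X U W)

namespace SSP

lemma tsum_pure_mul (a : X) (c : X → ℝ≥0∞) : ∑' z, (PMF.pure a) z * c z = c a := by
  rw [tsum_eq_single a]
  · simp [PMF.pure_apply]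
  · intro z hz; simp [PMF.pure_apply, hz]

lemma tsum_bind_mul (p : PMF X) (q : X → PMF X) (c : X → ℝ≥0∞) :
    ∑' z, (p.bind q) z * c z = ∑' y, p y * ∑' z, q y z * c z := by
  simp only [PMF.bind_apply]
  calc ∑' z, (∑' y, p y * q y z) * c z
      = ∑' z, ∑' y, p y * (q y z * c z) := by
        simp_rw [← ENNReal.tsum_mul_right, mul_assoc]
    _ = ∑' y, ∑' z, p y * (q y z * c z) := ENNReal.tsum_comm
    _ = ∑' y, p y * ∑' z, q y z * c z := by simp_rw [ENNReal.tsum_mul_left]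

lemma stateDist_add (π : ℕ → X → U) (x : X) (K m : ℕ) :
    S.stateDist π x (K + m) =
      (S.stateDist π x K).bind fun y => S.stateDist (SSP.tail π K) y m := by
  induction m with
  | zero => simp [stateDist, PMF.bind_pure]
  | succ m ih =>
      show (S.stateDist π x (K + m)).bind _ = _
      rw [ih, PMF.bind_bind]
      rfl

lemma expect_add (π : ℕ → X → U) (x : X) (K m : ℕ) (c : X → ℝ≥0∞) :
    S.expect π x (K + m) c = S.expect π x K (fun y => S.expect (SSP.tail π K) y m c) := by
  unfold expect
  rw [stateDist_add, tsum_bind_mul]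

lemma stageCost_add (π : ℕ → X → U) (x : X) (K m : ℕ) :
    S.stageCost π x (K + m) =
      S.expect π x K (fun y => S.stageCost (SSP.tail π K) y m) :=
  S.expect_add π x K m _

lemma r_add (π : ℕ → X → U) (x : X) (K m : ℕ) :
    S.r π x (K + m) = S.expect π x K (fun y => S.r (SSP.tail π K) y m) :=
  S.expect_add π x K m _

lemma expect_tsum (π : ℕ → X → U) (x : X) (K : ℕ) (c : ℕ → X → ℝ≥0∞) :
    ∑' m, S.expect π x K (c m) = S.expect π x K (fun y => ∑' m, c m y) := by
  unfold expect
  rw [ENNReal.tsum_comm]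
  simp_rw [ENNReal.tsum_mul_left]

lemma expect_mono (π : ℕ → X → U) (x : X) (K : ℕ) {c c' : X → ℝ≥0∞} (h : ∀ y, c y ≤ c' y) :
    S.expect π x K c ≤ S.expect π x K c' :=
  ENNReal.tsum_le_tsum fun y => mul_le_mul_right (h y) _

lemma expect_const_mul (π : ℕ → X → U) (x : X) (K : ℕ) (a : ℝ≥0∞) (c : X → ℝ≥0∞) :
    S.expect π x K (fun y => a * c y) = a * S.expect π x K c := by
  unfold expect
  rw [← ENNReal.tsum_mul_left]
  simp_rw [mul_left_comm]

lemma tsum_stageCost_add (π : ℕ → X → U) (x : X) (K : ℕ) :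
    ∑' m, S.stageCost π x (m + K) = S.expect π x K (S.Jcost (SSP.tail π K)) :=
  calc ∑' m, S.stageCost π x (m + K)
      = ∑' m, S.expect π x K (fun y => S.stageCost (SSP.tail π K) y m) := by
        refine tsum_congr fun m => ?_
        rw [add_comm, S.stageCost_add]
    _ = S.expect π x K (S.Jcost (SSP.tail π K)) := S.expect_tsum π x K _

lemma Jcost_split (π : ℕ → X → U) (x : X) (K : ℕ) :
    S.Jcost π x = (∑ k ∈ Finset.range K, S.stageCost π x k)
      + S.expect π x K (S.Jcost (SSP.tail π K)) := by
  rw [Jcost, ← Summable.sum_add_tsum_nat_add' (f := fun k => S.stageCost π x k) (k := K) ENNReal.summable]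
  rw [S.tsum_stageCost_add]

lemma N_split (π : ℕ → X → U) (x : X) (K : ℕ) :
    S.N π x = (∑ k ∈ Finset.range K, S.r π x k)
      + S.expect π x K (S.N (SSP.tail π K)) := by
  rw [N, ← Summable.sum_add_tsum_nat_add' (f := fun k => S.r π x k) (k := K) ENNReal.summable]
  congr 1
  calc ∑' m, S.r π x (m + K)
      = ∑' m, S.expect π x K (fun y => S.r (SSP.tail π K) y m) := by
        refine tsum_congr fun m => ?_
        rw [add_comm, S.r_add]
    _ = S.expect π x K (S.N (SSP.tail π K)) := S.expect_tsum π x K _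

lemma r_le_one (π : ℕ → X → U) (x : X) (k : ℕ) : S.r π x k ≤ 1 := by
  calc S.r π x k ≤ S.expect π x k (fun _ => 1) :=
        S.expect_mono π x k fun y => by split <;> simp
    _ = 1 := by simp [expect]

lemma Jstar_le_Jcost {π : ℕ → X → U} (hπ : S.IsPolicy π) (x : X) :
    S.Jstar x ≤ S.Jcost π x :=
  biInf_le _ hπ

lemma isPolicy_tail {π : ℕ → X → U} (hπ : S.IsPolicy π) (K : ℕ) :
    S.IsPolicy (SSP.tail π K) := fun m x => hπ (K + m) x

lemma stateDist_t {π : ℕ → X → U} (hπ : S.IsPolicy π) (k : ℕ) :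
    S.stateDist π S.t k = PMF.pure S.t := by
  induction k with
  | zero => rfl
  | succ k ih =>
      show (S.stateDist π S.t k).bind _ = _
      rw [ih, PMF.pure_bind]
      have : S.f S.t (π k S.t) = fun _ => S.t := funext fun w => S.f_absorb _ (hπ k S.t) w
      rw [this]
      exact PMF.bind_const _ _


lemma stageCost_t {π : ℕ → X → U} (hπ : S.IsPolicy π) (k : ℕ) : S.stageCost π S.t k = 0 := by
  rw [stageCost, expect, S.stateDist_t hπ, tsum_pure_mul]
  simp [S.g_zero _ (hπ k S.t)]

lemma Jcost_t' {π : ℕ → X → U} (hπ : S.IsPolicy π) : S.Jcost π S.t = 0 := by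
  simp [Jcost, S.stageCost_t hπ]

lemma r_t {π : ℕ → X → U} (hπ : S.IsPolicy π) (k : ℕ) : S.r π S.t k = 0 := by
  rw [r, expect, S.stateDist_t hπ, tsum_pure_mul]
  simp

lemma N_t {π : ℕ → X → U} (hπ : S.IsPolicy π) : S.N π S.t = 0 := by
  simp [N, S.r_t hπ]

lemma stageCost_le_mul {π : ℕ → X → U} (hπ : S.IsPolicy π) {b : ℝ≥0∞}
    (hg : ∀ x u w, S.g x u w ≤ b) (y : X) (m : ℕ) :
    S.stageCost π y m ≤ b * S.r π y m := by
  rw [r, ← S.expect_const_mul]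
  refine S.expect_mono π y m fun z => ?_
  by_cases hz : z = S.t
  · subst hz
    simp [S.g_zero _ (hπ m S.t)]
  · rw [if_neg hz, mul_one]
    calc ∑' w, S.P z (π m z) w * S.g z (π m z) w
        ≤ ∑' w, S.P z (π m z) w * b :=
          ENNReal.tsum_le_tsum fun w => mul_le_mul_right (hg _ _ _) _
      _ = b := by rw [ENNReal.tsum_mul_right, (S.P z (π m z)).tsum_coe, one_mul]

lemma Jcost_le_mul_N {π : ℕ → X → U} (hπ : S.IsPolicy π) {b : ℝ≥0∞}
    (hg : ∀ x u w, S.g x u w ≤ b) (y : X) :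
    S.Jcost π y ≤ b * S.N π y := by
  rw [N, ← ENNReal.tsum_mul_left]
  exact ENNReal.tsum_le_tsum fun k => S.stageCost_le_mul hπ hg y k

/-- The policy that follows `π` for the first `K` stages and `π'` afterwards. -/
def switch (π π' : ℕ → X → U) (K : ℕ) : ℕ → X → U :=
  fun k => if k < K then π k else π' (k - K)

lemma isPolicy_switch {π π' : ℕ → X → U} (hπ : S.IsPolicy π) (hπ' : S.IsPolicy π') (K : ℕ) :
    S.IsPolicy (switch π π' K) := by
  intro k x
  unfold switch
  split
  · exact hπ k x
  · exact hπ' _ x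

lemma tail_switch (π π' : ℕ → X → U) (K : ℕ) : SSP.tail (switch π π' K) K = π' := by
  funext m
  simp [tail, switch]

lemma stateDist_switch (π π' : ℕ → X → U) (K : ℕ) (x : X) :
    ∀ k ≤ K, S.stateDist (switch π π' K) x k = S.stateDist π x k := by
  intro k
  induction k with
  | zero => intro _; rfl
  | succ k ih =>
      intro hk
      have hk' : k < K := hk
      show (S.stateDist (switch π π' K) x k).bind _ = (S.stateDist π x k).bind _
      rw [ih (le_of_lt hk')]
      have : switch π π' K k = π k := if_pos hk'
      rw [this]

end SSP

end Aux

/-- If `g` is bounded, a uniformly proper policy exists, `X` is finite,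
`J*(x) > 0` for all `x ≠ t`, and `X* = X̂` where `X* = {x | J*(x) < ∞}`, then `Ĵ = J*`. -/
theorem Jhat_eq_Jstar_of_finite {X U W : Type*} [Countable W] (S : SSP X U W) [Finite X]
    (hb : S.BoundedCost) (hup : ∃ π : ℕ → X → U, S.UniformlyProper π)
    (hpos : ∀ x, x ≠ S.t → 0 < S.Jstar x)
    (hdom : {x | S.Jstar x < ⊤} = S.Xhat) :
    S.Jhat = S.Jstar := by
  have _inst := Fintype.ofFinite X
  obtain ⟨b, hbt, hbg⟩ := hb
  obtain ⟨π', hπ'⟩ := hup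
  obtain ⟨hπ'p, hC⟩ := hπ'
  set C := ⨆ x ∈ S.Xhat, S.N π' x with hCdef
  have hNC : ∀ y ∈ S.Xhat, S.N π' y ≤ C := fun y hy =>
    le_iSup₂ (f := fun (y : X) (_ : y ∈ S.Xhat) => S.N π' y) y hy
  have hJ'le : ∀ y, S.Jstar y < ⊤ → S.Jcost π' y ≤ b * C ∧ S.N π' y ≤ C := by
    intro y hy
    have hyX : y ∈ S.Xhat := by rw [← hdom]; exact hy
    exact ⟨(S.Jcost_le_mul_N hπ'p hbg y).trans (mul_le_mul_right (hNC y hyX) b),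
      hNC y hyX⟩
  set ε1 : ℝ≥0∞ := min (Finset.univ.inf fun y => if y = S.t then 1 else S.Jstar y) 1 with hε1
  have hε1pos : 0 < ε1 := by
    refine lt_min ?_ zero_lt_one
    rw [Finset.lt_inf_iff ENNReal.zero_lt_top]
    intro y _
    by_cases hy : y = S.t
    · simp [hy]
    · rw [if_neg hy]; exact hpos y hy
  have hε1top : ε1 ≠ ⊤ := ne_top_of_le_ne_top ENNReal.one_ne_top (min_le_right _ _)
  have hε1le : ∀ y, ε1 * (if y = S.t then 0 else 1) ≤ S.Jstar y := by
    intro y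
    by_cases hy : y = S.t
    · simp [hy]
    · rw [if_neg hy, mul_one]
      refine (min_le_left _ _).trans ((Finset.inf_le (Finset.mem_univ y)).trans ?_)
      rw [if_neg hy]
  funext x
  refine le_antisymm ?_ (le_iInf₂ fun π hπ => S.Jstar_le_Jcost hπ.1 x)
  by_cases hx : S.Jstar x = ⊤
  · exact hx ▸ le_top
  refine ENNReal.le_of_forall_pos_le_add fun ε hε _ => ?_
  have hε2 : (0:ℝ≥0∞) < (ε : ℝ≥0∞) / 2 :=
    ENNReal.div_pos (by exact_mod_cast hε.ne') ENNReal.ofNat_ne_top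
  have hε2t : (ε : ℝ≥0∞) / 2 < ⊤ :=
    ENNReal.div_lt_top ENNReal.coe_ne_top (by norm_num)
  have hlt : S.Jstar x < S.Jstar x + (ε : ℝ≥0∞) / 2 :=
    ENNReal.lt_add_right hx hε2.ne'
  obtain ⟨π, hπ, hπc⟩ : ∃ π, S.IsPolicy π ∧ S.Jcost π x < S.Jstar x + (ε : ℝ≥0∞) / 2 := by
    by_contra hcon
    push_neg at hcon
    have h2 : S.Jstar x + (ε : ℝ≥0∞) / 2 ≤ S.Jstar x :=
      le_iInf₂ fun π hπ => hcon π hπ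
    exact absurd h2 (not_le.2 hlt)
  have hJfin : S.Jcost π x ≠ ⊤ :=
    (hπc.trans (ENNReal.add_lt_top.2 ⟨lt_top_iff_ne_top.2 hx, hε2t⟩)).ne
  set T : ℕ → ℝ≥0∞ := fun K => S.expect π x K (S.Jcost (SSP.tail π K)) with hT
  have hsplit : ∀ K, S.Jcost π x = (∑ k ∈ Finset.range K, S.stageCost π x k) + T K :=
    fun K => S.Jcost_split π x K
  have hTle : ∀ K, T K ≤ S.Jcost π x := by
    intro K
    rw [hsplit K]
    exact le_add_self
  have hT0 : Tendsto T atTop (nhds 0) := by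
    have h1 := ENNReal.tendsto_sum_nat_add (fun k => S.stageCost π x k) hJfin
    exact h1.congr fun K => S.tsum_stageCost_add π x K
  have hJstarT : ∀ K, S.expect π x K S.Jstar ≤ T K := fun K =>
    S.expect_mono π x K fun y => S.Jstar_le_Jcost (S.isPolicy_tail hπ K) y
  have hrT : ∀ K, ε1 * S.r π x K ≤ T K := by
    intro K
    calc ε1 * S.r π x K
        = S.expect π x K (fun y => ε1 * (if y = S.t then 0 else 1)) :=
          (S.expect_const_mul π x K ε1 _).symm
      _ ≤ S.expect π x K S.Jstar := S.expect_mono π x K hε1le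
      _ ≤ T K := hJstarT K
  have hr0 : Tendsto (fun K => S.r π x K) atTop (nhds 0) := by
    have hupper : Tendsto (fun K => ε1⁻¹ * T K) atTop (nhds 0) := by
      have h2 := ENNReal.Tendsto.const_mul (a := ε1⁻¹) hT0
        (Or.inr (by simp [hε1pos.ne']))
      simpa using h2
    refine tendsto_of_tendsto_of_tendsto_of_le_of_le tendsto_const_nhds hupper
      (fun K => zero_le) (fun K => ?_)
    calc S.r π x K = ε1⁻¹ * (ε1 * S.r π x K) := by
          rw [← mul_assoc, ENNReal.inv_mul_cancel hε1pos.ne' hε1top, one_mul]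
      _ ≤ ε1⁻¹ * T K := mul_le_mul_right (hrT K) _
  have hbC0 : Tendsto (fun K => (b * C) * S.r π x K) atTop (nhds 0) := by
    have h2 := ENNReal.Tendsto.const_mul (a := b * C) hr0
      (Or.inr (ENNReal.mul_ne_top hbt.ne hC.ne))
    simpa using h2
  obtain ⟨K, hK⟩ : ∃ K, (b * C) * S.r π x K < (ε : ℝ≥0∞) / 2 :=
    (hbC0.eventually_lt_const hε2).exists
  set σ := SSP.switch π π' K with hσ
  have hσp : S.IsPolicy σ := S.isPolicy_switch hπ hπ'p K
  have hsd : S.stateDist σ x K = S.stateDist π x K := S.stateDist_switch π π' K x K le_rfl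
  have htail : SSP.tail σ K = π' := SSP.tail_switch π π' K
  have hsc : ∀ k < K, S.stageCost σ x k = S.stageCost π x k := by
    intro k hk
    unfold SSP.stageCost SSP.expect
    rw [S.stateDist_switch π π' K x k hk.le]
    have hc : σ k = π k := if_pos hk
    rw [hc]
  have hTfin : T K ≠ ⊤ := (lt_of_le_of_lt (hTle K) (lt_top_iff_ne_top.2 hJfin)).ne
  have hsupp : ∀ y, S.stateDist π x K y ≠ 0 → y ≠ S.t →
      S.Jcost π' y ≤ b * C ∧ S.N π' y ≤ C := by
    intro y hy _
    have h1 : S.stateDist π x K y * S.Jstar y ≤ S.expect π x K S.Jstar :=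
      ENNReal.le_tsum y
    have h2 : S.stateDist π x K y * S.Jstar y ≠ ⊤ :=
      (h1.trans_lt (lt_of_le_of_lt (hJstarT K) (lt_top_iff_ne_top.2 hTfin))).ne
    have h3 : S.Jstar y < ⊤ := by
      by_contra h
      rw [not_lt, top_le_iff] at h
      exact h2 (by rw [h, ENNReal.mul_top hy])
    exact hJ'le y h3
  have hExpJ : S.expect π x K (S.Jcost π') ≤ (b * C) * S.r π x K := by
    show S.expect π x K (S.Jcost π') ≤
      (b * C) * S.expect π x K (fun y => if y = S.t then 0 else 1)
    rw [← S.expect_const_mul]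
    unfold SSP.expect
    refine ENNReal.tsum_le_tsum fun y => ?_
    by_cases hy : S.stateDist π x K y = 0
    · simp [hy]
    by_cases hyt : y = S.t
    · subst hyt
      simp [S.Jcost_t' hπ'p]
    · simp only [if_neg hyt, mul_one]
      exact mul_le_mul_right (hsupp y hy hyt).1 _
  have hExpN : S.expect π x K (S.N π') ≤ C := by
    have hpt : ∀ y, S.stateDist π x K y * S.N π' y ≤ S.stateDist π x K y * C := by
      intro y
      by_cases hy : S.stateDist π x K y = 0
      · simp [hy]
      by_cases hyt : y = S.t
      · subst hyt
        rw [S.N_t hπ'p]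
        simp
      · exact mul_le_mul_right (hsupp y hy hyt).2 _
    calc S.expect π x K (S.N π') ≤ ∑' y, S.stateDist π x K y * C :=
          ENNReal.tsum_le_tsum hpt
      _ = C := by rw [ENNReal.tsum_mul_right, (S.stateDist π x K).tsum_coe, one_mul]
  have hJσ : S.Jcost σ x ≤ S.Jcost π x + (ε : ℝ≥0∞) / 2 := by
    have h1 : S.Jcost σ x = (∑ k ∈ Finset.range K, S.stageCost π x k)
        + S.expect π x K (S.Jcost π') := by
      rw [S.Jcost_split σ x K, htail]
      congr 1
      · exact Finset.sum_congr rfl fun k hk => hsc k (Finset.mem_range.1 hk)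
      · unfold SSP.expect
        rw [hsd]
    rw [h1]
    calc (∑ k ∈ Finset.range K, S.stageCost π x k) + S.expect π x K (S.Jcost π')
        ≤ (∑ k ∈ Finset.range K, S.stageCost π x k) + (ε : ℝ≥0∞) / 2 :=
          add_le_add le_rfl ((hExpJ.trans hK.le))
      _ ≤ S.Jcost π x + (ε : ℝ≥0∞) / 2 := by
          refine add_le_add ?_ le_rfl
          rw [hsplit K]
          exact le_self_add
  have hJσfin : S.Jcost σ x < ⊤ :=
    hJσ.trans_lt (ENNReal.add_lt_top.2 ⟨lt_top_iff_ne_top.2 hJfin, hε2t⟩)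
  have hNσ : S.N σ x < ⊤ := by
    rw [S.N_split σ x K, htail]
    have h2 : S.expect σ x K (S.N π') = S.expect π x K (S.N π') := by
      unfold SSP.expect
      rw [hsd]
    rw [h2]
    refine ENNReal.add_lt_top.2 ⟨?_, lt_of_le_of_lt hExpN hC⟩
    have hr1 : ∀ k < K, S.r σ x k ≤ 1 := fun k _ => S.r_le_one σ x k
    calc ∑ k ∈ Finset.range K, S.r σ x k ≤ ∑ _k ∈ Finset.range K, (1:ℝ≥0∞) :=
          Finset.sum_le_sum fun k hk => hr1 k (Finset.mem_range.1 hk)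
      _ = (K : ℝ≥0∞) := by simp
      _ < ⊤ := ENNReal.natCast_lt_top K
  have hproper : S.ProperAt σ x := ⟨hσp, hJσfin, hNσ⟩
  calc S.Jhat x ≤ S.Jcost σ x := biInf_le _ hproper
    _ ≤ S.Jcost π x + (ε : ℝ≥0∞) / 2 := hJσ
    _ ≤ (S.Jstar x + (ε : ℝ≥0∞) / 2) + (ε : ℝ≥0∞) / 2 := add_le_add hπc.le le_rfl
    _ = S.Jstar x + (ε : ℝ≥0∞) := by rw [add_assoc, ENNReal.add_halves]
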